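/- arXiv:2401.05523 — 2 statements merged into one kernel-verified Lean document; each statement's English description precedes it below -/
import Mathlib

section
/- If A is a critical independent set of a graph G and X = A ∪ N(A), then the induced subgraph G[X] is a König-Egerváry graph with α(G[X]) = |A| and μ(G[X]) = |N(A)|. -/
open SimpleGraph

variable {V : Type*}

/-- A set of vertices is independent: no two of its vertices are adjacent. -/
def IsIndep (G : SimpleGraph V) (s : Set V) : Prop :=
  s.Pairwise fun a b => ¬ G.Adj a b

/-- The independence number α(G). -/
noncomputable def alphaNum (G : SimpleGraph V) : ℕ :=
  sSup {n | ∃ s : Set V, IsIndep G s ∧ s.ncard = n}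

/-- The matching number μ(G). -/
noncomputable def muNum (G : SimpleGraph V) : ℕ :=
  sSup {n | ∃ M : SimpleGraph.Subgraph G, M.IsMatching ∧ M.edgeSet.ncard = n}

/-- The neighborhood N(A) of a set of vertices. -/
def nbhd (G : SimpleGraph V) (A : Set V) : Set V := {v | ∃ a ∈ A, G.Adj a v}

/-- The difference d(A) = |A| - |N(A)| of a set of vertices. -/
noncomputable def diffSet (G : SimpleGraph V) (A : Set V) : ℤ :=
  (A.ncard : ℤ) - (nbhd G A).ncard

/-- The critical difference d(G). -/
noncomputable def critDiff (G : SimpleGraph V) : ℤ :=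
  sSup {d | ∃ I : Set V, IsIndep G I ∧ diffSet G I = d}

/-- A critical independent set: an independent set attaining the critical difference. -/
def IsCriticalIndep (G : SimpleGraph V) (A : Set V) : Prop :=
  IsIndep G A ∧ diffSet G A = critDiff G

/-- ker(G): the intersection of all critical independent sets. -/
noncomputable def kerSet (G : SimpleGraph V) : Set V :=
  ⋂₀ {A | IsCriticalIndep G A}

/-- A maximum independent set. -/
noncomputable def IsMaxIndep (G : SimpleGraph V) (S : Set V) : Prop :=
  IsIndep G S ∧ S.ncard = alphaNum G

/-- core(G): the intersection of all maximum independent sets. -/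
noncomputable def coreSet (G : SimpleGraph V) : Set V :=
  ⋂₀ {S | IsMaxIndep G S}

/-- A König–Egerváry graph: α(G) + μ(G) = n(G). -/
def KonigEgervary (G : SimpleGraph V) : Prop :=
  alphaNum G + muNum G = Nat.card V

set_option linter.unusedSectionVars false

section Aux
variable [Fintype V] (G : SimpleGraph V)

lemma alpha_bdd : BddAbove {n | ∃ s : Set V, IsIndep G s ∧ s.ncard = n} := by
  refine ⟨Nat.card V, ?_⟩
  rintro n ⟨s, -, rfl⟩
  rw [← Set.ncard_univ]
  exact Set.ncard_le_ncard (Set.subset_univ s) (Set.toFinite _)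

lemma indep_le_alpha {s : Set V} (hs : IsIndep G s) : s.ncard ≤ alphaNum G :=
  le_csSup (alpha_bdd G) ⟨s, hs, rfl⟩

lemma mu_bdd : BddAbove {n | ∃ M : SimpleGraph.Subgraph G, M.IsMatching ∧ M.edgeSet.ncard = n} := by
  refine ⟨Nat.card (Sym2 V), ?_⟩
  rintro n ⟨M, -, rfl⟩
  rw [← Set.ncard_univ]
  exact Set.ncard_le_ncard (Set.subset_univ _) (Set.toFinite _)

lemma matching_le_mu {M : SimpleGraph.Subgraph G} (hM : M.IsMatching) :
    M.edgeSet.ncard ≤ muNum G :=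
  le_csSup (mu_bdd G) ⟨M, hM, rfl⟩

lemma alpha_attained : ∃ s : Set V, IsIndep G s ∧ s.ncard = alphaNum G := by
  have h := Nat.sSup_mem (s := {n | ∃ s : Set V, IsIndep G s ∧ s.ncard = n})
    ⟨0, ∅, Set.pairwise_empty _, Set.ncard_empty V⟩ (alpha_bdd G)
  exact h

lemma mu_attained : ∃ M : SimpleGraph.Subgraph G, M.IsMatching ∧ M.edgeSet.ncard = muNum G := by
  have h := Nat.sSup_mem (s := {n | ∃ M : SimpleGraph.Subgraph G, M.IsMatching ∧ M.edgeSet.ncard = n})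
    ⟨0, ⊥, fun v hv => absurd hv (by simp [SimpleGraph.Subgraph.verts_bot]), by
      rw [SimpleGraph.Subgraph.edgeSet_bot]; exact Set.ncard_empty _⟩ (mu_bdd G)
  exact h

lemma alpha_add_mu_le : alphaNum G + muNum G ≤ Nat.card V := by
  classical
  rcases isEmpty_or_nonempty V with hV | hV
  · obtain ⟨s, hs, hscard⟩ := alpha_attained G
    obtain ⟨M, hM, hMcard⟩ := mu_attained G
    rw [← hscard, ← hMcard, Set.eq_empty_of_isEmpty s, Set.eq_empty_of_isEmpty M.edgeSet]
    simp [Nat.card_of_isEmpty]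
  obtain ⟨s, hs, hscard⟩ := alpha_attained G
  obtain ⟨M, hM, hMcard⟩ := mu_attained G
  rw [← hscard, ← hMcard]
  have key : ∀ e ∈ M.edgeSet, ∃ v w, e = s(v, w) ∧ M.Adj v w ∧ v ∉ s := by
    intro e he
    induction e with
    | _ a b =>
      rw [SimpleGraph.Subgraph.mem_edgeSet] at he
      have hadj : G.Adj a b := M.adj_sub he
      by_cases ha : a ∈ s
      · refine ⟨b, a, Sym2.eq_swap, he.symm, fun hb => ?_⟩
        exact hs hb ha hadj.ne.symm hadj.symm
      · exact ⟨a, b, rfl, he, ha⟩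
  choose! f g hfg hadj hns using key
  have hle : M.edgeSet.ncard ≤ sᶜ.ncard := by
    refine Set.ncard_le_ncard_of_injOn f (fun e he => hns e he) ?_ (Set.toFinite _)
    intro e1 h1 e2 h2 heq
    have hv1 : M.Adj (f e1) (g e1) := hadj e1 h1
    have hv2 : M.Adj (f e2) (g e2) := hadj e2 h2
    rw [heq] at hv1
    obtain ⟨w, -, hun⟩ := hM (M.edge_vert hv2)
    have : g e1 = g e2 := by rw [hun _ hv1, hun _ hv2]
    rw [hfg e1 h1, hfg e2 h2, heq, this]
  calc s.ncard + M.edgeSet.ncard ≤ s.ncard + sᶜ.ncard := by omega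
    _ = Nat.card V := Set.ncard_add_ncard_compl s

end Aux

section Hall
variable [Fintype V] {G : SimpleGraph V} {A : Set V}

lemma critDiff_bdd (G : SimpleGraph V) [Fintype V] :
    BddAbove {d | ∃ I : Set V, IsIndep G I ∧ diffSet G I = d} := by
  refine ⟨(Nat.card V : ℤ), ?_⟩
  rintro d ⟨I, -, rfl⟩
  have h1 : I.ncard ≤ Nat.card V := by
    rw [← Set.ncard_univ]; exact Set.ncard_le_ncard (Set.subset_univ I) (Set.toFinite _)
  have h2 : (0 : ℤ) ≤ ((nbhd G I).ncard : ℤ) := Int.natCast_nonneg _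
  unfold diffSet
  omega

lemma crit_matching (hA : IsCriticalIndep G A) :
    ∃ f : ↥(nbhd G A) → V, Function.Injective f ∧
      ∀ v : ↥(nbhd G A), f v ∈ A ∧ G.Adj (f v) ↑v := by
  classical
  set N := nbhd G A with hN
  let t : ↥N → Finset V := fun v => (Set.toFinite {a | a ∈ A ∧ G.Adj a ↑v}).toFinset
  have hmem : ∀ (v : ↥N) (a : V), a ∈ t v ↔ a ∈ A ∧ G.Adj a ↑v := by
    intro v a; simp [t, Set.Finite.mem_toFinset]
  have hall : ∀ T : Finset ↥N, T.card ≤ (T.biUnion t).card := by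
    intro T
    set T'' : Set V := Subtype.val '' (↑T : Set ↥N) with hT''def
    have hT''sub : T'' ⊆ N := by rintro v ⟨i, -, rfl⟩; exact i.2
    have hcardT'' : T''.ncard = T.card := by
      rw [hT''def, Set.ncard_image_of_injective _ Subtype.val_injective, Set.ncard_coe_finset]
    set A' : Set V := A \ nbhd G T'' with hA'def
    have hindep : IsIndep G A' := hA.1.mono Set.diff_subset
    have hA'card : (A'.ncard : ℤ) = (A.ncard : ℤ) - ((A ∩ nbhd G T'').ncard : ℤ) := by
      have h := Set.ncard_inter_add_ncard_diff_eq_ncard A (nbhd G T'') (Set.toFinite _)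
      rw [hA'def]; omega
    have hsub : nbhd G A' ⊆ N \ T'' := by
      rintro v ⟨a, haA', hadj⟩
      refine ⟨⟨a, haA'.1, hadj⟩, fun hvT => ?_⟩
      exact haA'.2 ⟨v, hvT, hadj.symm⟩
    have hNcard : ((nbhd G A').ncard : ℤ) ≤ (N.ncard : ℤ) - (T''.ncard : ℤ) := by
      have h1 : (nbhd G A').ncard ≤ (N \ T'').ncard :=
        Set.ncard_le_ncard hsub (Set.toFinite _)
      have h2 := Set.ncard_diff_add_ncard_of_subset hT''sub (Set.toFinite _)
      omega
    have hd : diffSet G A' ≤ diffSet G A := by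
      rw [hA.2]
      exact le_csSup (critDiff_bdd G) ⟨A', hindep, rfl⟩
    have hineq : (T''.ncard : ℤ) ≤ ((A ∩ nbhd G T'').ncard : ℤ) := by
      unfold diffSet at hd
      rw [← hN] at hd
      omega
    have himage : A ∩ nbhd G T'' = ↑(T.biUnion t) := by
      ext a
      simp only [Set.mem_inter_iff, Finset.coe_biUnion, Set.mem_iUnion, Finset.mem_coe, hmem]
      constructor
      · rintro ⟨haA, v, hvT'', hadj⟩
        obtain ⟨i, hiT, rfl⟩ := hvT''
        exact ⟨i, hiT, haA, hadj.symm⟩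
      · rintro ⟨i, hiT, haA, hadj⟩
        exact ⟨haA, ↑i, ⟨i, hiT, rfl⟩, hadj.symm⟩
    have : (A ∩ nbhd G T'').ncard = (T.biUnion t).card := by
      rw [himage, Set.ncard_coe_finset]
    omega
  obtain ⟨f, hfinj, hft⟩ := (Finset.all_card_le_biUnion_card_iff_exists_injective t).mp hall
  refine ⟨f, hfinj, fun v => ?_⟩
  have := (hmem v (f v)).mp (hft v)
  exact ⟨this.1, this.2⟩

end Hall

theorem stmt_5' [Fintype V] (G : SimpleGraph V) (A : Set V)
    (hA : IsCriticalIndep G A) :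
    alphaNum (G.induce (A ∪ nbhd G A)) + muNum (G.induce (A ∪ nbhd G A))
        = Nat.card ↥(A ∪ nbhd G A) ∧
    alphaNum (G.induce (A ∪ nbhd G A)) = A.ncard ∧
    muNum (G.induce (A ∪ nbhd G A)) = (nbhd G A).ncard := by
  classical
  set X : Set V := A ∪ nbhd G A with hX
  set H : SimpleGraph ↥X := G.induce X with hH
  haveI : Fintype ↥X := Fintype.ofFinite _
  have hdisj : Disjoint A (nbhd G A) := by
    rw [Set.disjoint_left]
    rintro v hvA ⟨a, haA, hadj⟩
    exact hA.1 haA hvA hadj.ne hadj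
  have hcardX : Nat.card ↥X = A.ncard + (nbhd G A).ncard := by
    rw [Nat.card_coe_set_eq, hX, Set.ncard_union_eq hdisj (Set.toFinite _) (Set.toFinite _)]
  -- alpha ≥ |A|
  have halpha : A.ncard ≤ alphaNum H := by
    have hindep : IsIndep H (Subtype.val ⁻¹' A) := by
      intro a ha b hb hne
      have : (a : V) ≠ b := fun h => hne (Subtype.ext h)
      intro hadj
      exact hA.1 ha hb this hadj
    have hcard : (Subtype.val ⁻¹' A : Set ↥X).ncard = A.ncard := by
      have himg : Subtype.val '' (Subtype.val ⁻¹' A : Set ↥X) = A := by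
        rw [Subtype.image_preimage_coe]
        exact Set.inter_eq_self_of_subset_right Set.subset_union_left
      have h := Set.ncard_image_of_injective (Subtype.val ⁻¹' A : Set ↥X) Subtype.val_injective
      rw [himg] at h
      exact h.symm
    rw [← hcard]
    exact indep_le_alpha H hindep
  -- mu ≥ |N(A)|
  obtain ⟨f, hfinj, hf⟩ := crit_matching hA
  have hmu : (nbhd G A).ncard ≤ muNum H := by
    set vX : ↥(nbhd G A) → ↥X := fun v => ⟨↑v, Or.inr v.2⟩ with hvX
    set fX : ↥(nbhd G A) → ↥X := fun v => ⟨f v, Or.inl (hf v).1⟩ with hfX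
    have hfXA : ∀ v, (fX v : V) ∈ A := fun v => (hf v).1
    have hvXN : ∀ v, (vX v : V) ∈ nbhd G A := fun v => v.2
    have hAN : ∀ x : V, x ∈ A → x ∈ nbhd G A → False := fun x h1 h2 =>
      Set.disjoint_left.mp hdisj h1 h2
    set M : SimpleGraph.Subgraph H :=
      { verts := {x : ↥X | (↑x ∈ nbhd G A) ∨ ∃ v, fX v = x}
        Adj := fun a b => (∃ h : (a : V) ∈ nbhd G A, f ⟨↑a, h⟩ = ↑b) ∨
          (∃ h : (b : V) ∈ nbhd G A, f ⟨↑b, h⟩ = ↑a)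
        adj_sub := by
          rintro a b (⟨h, heq⟩ | ⟨h, heq⟩)
          · have := (hf ⟨↑a, h⟩).2
            rw [heq] at this
            exact this.symm
          · have := (hf ⟨↑b, h⟩).2
            rw [heq] at this
            exact this
        edge_vert := by
          rintro a b (⟨h, heq⟩ | ⟨h, heq⟩)
          · exact Or.inl h
          · exact Or.inr ⟨⟨↑b, h⟩, Subtype.ext heq⟩
        symm := ⟨fun a b h => h.symm⟩ } with hM
    have hMatch : M.IsMatching := by
      rintro v (hv | ⟨u, hu⟩)
      · refine ⟨fX ⟨↑v, hv⟩, Or.inl ⟨hv, rfl⟩, ?_⟩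
        rintro w (⟨h, heq⟩ | ⟨h, heq⟩)
        · exact Subtype.ext heq.symm
        · exact absurd hv (fun hv' => hAN _ (heq ▸ (hf ⟨↑w, h⟩).1) hv')
      · refine ⟨vX u, Or.inr ⟨hvXN u, ?_⟩, ?_⟩
        · show f ⟨↑(vX u), _⟩ = ↑v
          rw [← hu]
        · rintro w (⟨h, heq⟩ | ⟨h, heq⟩)
        -- case 1: ↑v ∈ nbhd G A, but ↑v = f u ∈ A
          · exact absurd h (fun h' => hAN _ (hu ▸ (hf u).1 : (v : V) ∈ A) h')
          · have huw : (⟨↑w, h⟩ : ↥(nbhd G A)) = u := by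
              apply hfinj
              rw [heq, ← hu]
            have h3 := congrArg Subtype.val huw
            exact Subtype.ext (show (w : V) = ↑(vX u) from h3)
    have hEdge : M.edgeSet.ncard = (nbhd G A).ncard := by
      set e : ↥(nbhd G A) → Sym2 ↥X := fun v => s(vX v, fX v) with he
      have hrange : M.edgeSet = Set.range e := by
        ext ed
        induction ed with
        | _ a b =>
          simp only [SimpleGraph.Subgraph.mem_edgeSet, Set.mem_range]
          constructor
          · rintro (⟨h, heq⟩ | ⟨h, heq⟩)
            · refine ⟨⟨↑a, h⟩, ?_⟩
              have h1 : vX ⟨↑a, h⟩ = a := Subtype.ext rfl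
              have h2 : fX ⟨↑a, h⟩ = b := Subtype.ext heq
              rw [he]
              show s(vX ⟨↑a, h⟩, fX ⟨↑a, h⟩) = s(a, b)
              rw [h1, h2]
            · refine ⟨⟨↑b, h⟩, ?_⟩
              have h1 : vX ⟨↑b, h⟩ = b := Subtype.ext rfl
              have h2 : fX ⟨↑b, h⟩ = a := Subtype.ext heq
              rw [he]
              show s(vX ⟨↑b, h⟩, fX ⟨↑b, h⟩) = s(a, b)
              rw [h1, h2, Sym2.eq_swap]
          · rintro ⟨u, hu⟩
            rw [he] at hu
            rw [Sym2.eq_iff] at hu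
            rcases hu with ⟨h1, h2⟩ | ⟨h1, h2⟩
            · refine Or.inl ⟨h1 ▸ hvXN u, ?_⟩
              have hu' : (⟨↑a, h1 ▸ hvXN u⟩ : ↥(nbhd G A)) = u := by
                apply Subtype.ext
                show ((a : ↥X) : V) = ((u : ↥(nbhd G A)) : V)
                exact congrArg Subtype.val h1.symm
              show f ⟨↑a, _⟩ = ↑b
              rw [hu']
              exact congrArg Subtype.val h2
            · refine Or.inr ⟨h1 ▸ hvXN u, ?_⟩
              have hu' : (⟨↑b, h1 ▸ hvXN u⟩ : ↥(nbhd G A)) = u := by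
                apply Subtype.ext
                show ((b : ↥X) : V) = ((u : ↥(nbhd G A)) : V)
                exact congrArg Subtype.val h1.symm
              show f ⟨↑b, _⟩ = ↑a
              rw [hu']
              exact congrArg Subtype.val h2
      have heinj : Function.Injective e := by
        intro u u' huu
        rw [he] at huu
        rw [Sym2.eq_iff] at huu
        rcases huu with ⟨h1, -⟩ | ⟨h1, h2⟩
        · have h3 := congrArg Subtype.val h1
          exact Subtype.ext (show (u : V) = ↑u' from h3)
        · have h3 := congrArg Subtype.val h1
          have h4 : (u : V) ∈ A := by
            rw [show (u : V) = (fX u' : V) from h3]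
            exact hfXA u'
          exact absurd (hvXN u) (fun h => hAN _ h4 h)
      rw [hrange, ← Set.image_univ, Set.ncard_image_of_injective _ heinj, Set.ncard_univ,
        Nat.card_coe_set_eq]
    rw [← hEdge]
    exact matching_le_mu H hMatch
  have hle := alpha_add_mu_le H
  rw [hcardX] at hle
  have halpha' : alphaNum H ≤ A.ncard := by omega
  have hmu' : muNum H ≤ (nbhd G A).ncard := by omega
  refine ⟨?_, by omega, by omega⟩
  rw [hcardX]; omega

theorem stmt_5 [Fintype V] (G : SimpleGraph V) (A : Set V)
    (hA : IsCriticalIndep G A) :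
    KonigEgervary (G.induce (A ∪ nbhd G A)) ∧
    alphaNum (G.induce (A ∪ nbhd G A)) = A.ncard ∧
    muNum (G.induce (A ∪ nbhd G A)) = (nbhd G A).ncard := by
  obtain ⟨h1, h2, h3⟩ := stmt_5' G A hA
  exact ⟨h1, h2, h3⟩
end

section
/- Let A ⊆ V(G) with ker(G) ⊆ A and let H = G[N[A]] be the subgraph induced on the closed neighborhood of A. Then d(H) ≥ d(G). Moreover, if A is a critical independent set of G, then d(H) = d(G) and ker(H) = ker(G). -/
set_option linter.unusedSectionVars false
set_option linter.unusedVariables false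


open SimpleGraph

variable {V : Type*}

section Helpers

variable {V : Type*} [Finite V] {G : SimpleGraph V}

lemma nbhd_mono {A B : Set V} (h : A ⊆ B) : nbhd G A ⊆ nbhd G B :=
  fun v ⟨a, ha, hadj⟩ => ⟨a, h ha, hadj⟩

lemma nbhd_union (A B : Set V) : nbhd G (A ∪ B) = nbhd G A ∪ nbhd G B := by
  ext v; constructor
  · rintro ⟨a, ha | ha, hadj⟩
    · exact Or.inl ⟨a, ha, hadj⟩
    · exact Or.inr ⟨a, ha, hadj⟩
  · rintro (⟨a, ha, hadj⟩ | ⟨a, ha, hadj⟩)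
    · exact ⟨a, Or.inl ha, hadj⟩
    · exact ⟨a, Or.inr ha, hadj⟩

lemma indep_empty : IsIndep G (∅ : Set V) := Set.pairwise_empty _

lemma nbhd_empty : nbhd G (∅ : Set V) = ∅ := by ext v; simp [nbhd]

lemma diffSet_bdd : BddAbove {d | ∃ I : Set V, IsIndep G I ∧ diffSet G I = d} := by
  refine ⟨(Nat.card V : ℤ), ?_⟩
  rintro d ⟨I, _, rfl⟩
  have h1 : I.ncard ≤ Nat.card V := by
    simpa [Set.ncard_univ] using Set.ncard_le_ncard (Set.subset_univ I) Set.finite_univ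
  have h2 : (0:ℤ) ≤ (nbhd G I).ncard := Int.natCast_nonneg _
  simp only [diffSet]
  omega

lemma diffSet_nonempty : ({d | ∃ I : Set V, IsIndep G I ∧ diffSet G I = d}).Nonempty :=
  ⟨0, ∅, indep_empty, by simp [diffSet, nbhd_empty]⟩

lemma le_critDiff {I : Set V} (h : IsIndep G I) : diffSet G I ≤ critDiff G :=
  le_csSup diffSet_bdd ⟨I, h, rfl⟩

lemma critDiff_nonneg : 0 ≤ critDiff G := by
  have := le_critDiff (G := G) indep_empty
  simpa [diffSet, nbhd_empty] using this

lemma exists_criticalIndep : ∃ I : Set V, IsCriticalIndep G I := by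
  have hfin : ({d | ∃ I : Set V, IsIndep G I ∧ diffSet G I = d}).Finite := by
    have : {d | ∃ I : Set V, IsIndep G I ∧ diffSet G I = d} ⊆ (fun I => diffSet G I) '' Set.univ := by
      rintro d ⟨I, _, rfl⟩; exact ⟨I, trivial, rfl⟩
    exact Set.Finite.subset (Set.finite_univ.image _) this
  obtain ⟨I, hI, hd⟩ := diffSet_nonempty.csSup_mem hfin
  exact ⟨I, hI, hd⟩

lemma diffSet_le_critDiff (S : Set V) : diffSet G S ≤ critDiff G := by
  classical
  set I := S \ nbhd G S with hI
  have hind : IsIndep G I := by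
    intro a ha b hb hne hadj
    exact hb.2 ⟨a, ha.1, hadj⟩
  have hIcard : (I.ncard : ℤ) = (S.ncard : ℤ) - (S ∩ nbhd G S).ncard := by
    have h1 : I = S \ (S ∩ nbhd G S) := by
      ext v; simp [hI]
    have h2 := Set.ncard_diff (Set.inter_subset_left (s := S) (t := nbhd G S)) (Set.toFinite _)
    have h3 : (S ∩ nbhd G S).ncard ≤ S.ncard :=
      Set.ncard_le_ncard Set.inter_subset_left (Set.toFinite _)
    rw [h1, h2]
    omega
  have hNsub : nbhd G I ⊆ nbhd G S \ (S ∩ nbhd G S) := by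
    rintro v ⟨u, hu, hadj⟩
    refine ⟨⟨u, hu.1, hadj⟩, ?_⟩
    rintro ⟨hvS, -⟩
    exact hu.2 ⟨v, hvS, hadj.symm⟩
  have hNcard : ((nbhd G I).ncard : ℤ) ≤ ((nbhd G S).ncard : ℤ) - (S ∩ nbhd G S).ncard := by
    have h1 : (nbhd G I).ncard ≤ (nbhd G S \ (S ∩ nbhd G S)).ncard :=
      Set.ncard_le_ncard hNsub (Set.toFinite _)
    have h2 := Set.ncard_diff (Set.inter_subset_right (s := S) (t := nbhd G S)) (Set.toFinite _)
    have h3 : (S ∩ nbhd G S).ncard ≤ (nbhd G S).ncard :=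
      Set.ncard_le_ncard Set.inter_subset_right (Set.toFinite _)
    omega
  have : diffSet G S ≤ diffSet G I := by
    simp only [diffSet]
    omega
  exact this.trans (le_critDiff hind)

lemma inter_criticalIndep {I J : Set V} (hI : IsCriticalIndep G I) (hJ : IsCriticalIndep G J) :
    IsCriticalIndep G (I ∩ J) := by
  have hind : IsIndep G (I ∩ J) := fun a ha b hb hne => hI.1 ha.1 hb.1 hne
  have hcard : ((I ∪ J).ncard : ℤ) + (I ∩ J).ncard = I.ncard + J.ncard := by
    have := Set.ncard_union_add_ncard_inter I J (Set.toFinite _) (Set.toFinite _)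
    omega
  have hNU : nbhd G (I ∪ J) = nbhd G I ∪ nbhd G J := nbhd_union I J
  have hNI : nbhd G (I ∩ J) ⊆ nbhd G I ∩ nbhd G J :=
    Set.subset_inter (nbhd_mono Set.inter_subset_left) (nbhd_mono Set.inter_subset_right)
  have hNcard : ((nbhd G (I ∪ J)).ncard : ℤ) + (nbhd G (I ∩ J)).ncard
      ≤ (nbhd G I).ncard + (nbhd G J).ncard := by
    have h1 := Set.ncard_union_add_ncard_inter (nbhd G I) (nbhd G J) (Set.toFinite _) (Set.toFinite _)
    have h2 : (nbhd G (I ∩ J)).ncard ≤ (nbhd G I ∩ nbhd G J).ncard :=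
      Set.ncard_le_ncard hNI (Set.toFinite _)
    rw [hNU]
    omega
  have hsup : diffSet G I + diffSet G J ≤ diffSet G (I ∪ J) + diffSet G (I ∩ J) := by
    simp only [diffSet]
    omega
  have h1 : diffSet G (I ∪ J) ≤ critDiff G := diffSet_le_critDiff _
  have h2 : diffSet G (I ∩ J) ≤ critDiff G := le_critDiff hind
  refine ⟨hind, le_antisymm h2 ?_⟩
  rw [hI.2, hJ.2] at hsup
  omega

lemma ker_criticalIndep : IsCriticalIndep G (kerSet G) := by
  classical
  set F := {A : Set V | IsCriticalIndep G A} with hF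
  obtain ⟨I₁, hI₁⟩ := exists_criticalIndep (G := G)
  have hne : {n | ∃ I ∈ F, I.ncard = n}.Nonempty := ⟨I₁.ncard, I₁, hI₁, rfl⟩
  obtain ⟨I₀, hI₀F, hI₀n⟩ := Nat.sInf_mem hne
  have hmin : ∀ I ∈ F, I₀.ncard ≤ I.ncard := fun I hIF => by
    rw [hI₀n]; exact Nat.sInf_le ⟨I, hIF, rfl⟩
  have hsub : ∀ I ∈ F, I₀ ⊆ I := by
    intro I hIF
    have hmem : I₀ ∩ I ∈ F := inter_criticalIndep hI₀F hIF
    have hle : I₀.ncard ≤ (I₀ ∩ I).ncard := hmin _ hmem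
    have heq : I₀ ∩ I = I₀ :=
      Set.eq_of_subset_of_ncard_le Set.inter_subset_left hle (Set.toFinite _)
    rw [← heq]; exact Set.inter_subset_right
  have hker : kerSet G = I₀ := by
    apply le_antisymm
    · exact Set.sInter_subset_of_mem hI₀F
    · exact Set.subset_sInter hsub
  rw [hker]; exact hI₀F

lemma nbhd_induce_image (s : Set V) (J' : Set ↥s) :
    Subtype.val '' (nbhd (G.induce s) J') = nbhd G (Subtype.val '' J') ∩ s := by
  ext v
  constructor
  · rintro ⟨v', ⟨a', ha', hadj⟩, rfl⟩
    exact ⟨⟨a', ⟨a', ha', rfl⟩, hadj⟩, v'.2⟩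
  · rintro ⟨⟨a, ⟨a', ha', rfl⟩, hadj⟩, hvs⟩
    exact ⟨⟨v, hvs⟩, ⟨a', ha', hadj⟩, rfl⟩

lemma isIndep_induce_iff (s : Set V) (J' : Set ↥s) :
    IsIndep (G.induce s) J' ↔ IsIndep G (Subtype.val '' J') := by
  constructor
  · rintro h _ ⟨a, ha, rfl⟩ _ ⟨b, hb, rfl⟩ hne hadj
    exact h ha hb (fun e => hne (congrArg _ e)) hadj
  · intro h a ha b hb hne hadj
    exact h ⟨a, ha, rfl⟩ ⟨b, hb, rfl⟩ (fun e => hne (Subtype.val_injective e)) hadj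

lemma diffSet_induce (s : Set V) (J' : Set ↥s) :
    diffSet (G.induce s) J'
      = ((Subtype.val '' J').ncard : ℤ) - (nbhd G (Subtype.val '' J') ∩ s).ncard := by
  simp only [diffSet]
  rw [← Set.ncard_image_of_injective J' Subtype.val_injective,
      ← Set.ncard_image_of_injective (nbhd (G.induce s) J') Subtype.val_injective,
      nbhd_induce_image]

lemma indep_mono {s t : Set V} (h : s ⊆ t) (ht : IsIndep G t) : IsIndep G s :=
  ht.mono h

lemma nbhd_disjoint_self {A : Set V} (hA : IsIndep G A) : A ∩ nbhd G A = ∅ := by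
  ext v
  simp only [Set.mem_inter_iff, Set.mem_empty_iff_false, iff_false, not_and]
  rintro hv ⟨a, ha, hadj⟩
  rcases eq_or_ne a v with rfl | hne
  · exact G.ne_of_adj hadj rfl
  · exact hA ha hv hne hadj

lemma key_chain {A : Set V} (hA : IsCriticalIndep G A) {J : Set V} (hJ : IsIndep G J)
    (hJW : J ⊆ A ∪ nbhd G A) :
    (J.ncard : ℤ) - (nbhd G J ∩ (A ∪ nbhd G A)).ncard ≤ diffSet G (J ∩ A) := by
  have hd : A ∩ nbhd G A = ∅ := nbhd_disjoint_self hA.1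
  set JN := J ∩ nbhd G A with hJN
  -- |J| = |J∩A| + |JN|
  have h1 : J \ A = JN := by
    ext v
    constructor
    · rintro ⟨hvJ, hvA⟩
      rcases hJW hvJ with h | h
      · exact absurd h hvA
      · exact ⟨hvJ, h⟩
    · rintro ⟨hvJ, hvN⟩
      refine ⟨hvJ, fun hvA => ?_⟩
      have : v ∈ A ∩ nbhd G A := ⟨hvA, hvN⟩
      simp [hd] at this
  have hJcard : (J ∩ A).ncard + JN.ncard = J.ncard := by
    rw [← h1]; exact Set.ncard_inter_add_ncard_diff_eq_ncard J A (Set.toFinite _)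
  -- |N(J) ∩ W| = |N(J)∩A| + |N(J)∩N(A)|
  have h2 : nbhd G J ∩ (A ∪ nbhd G A) = (nbhd G J ∩ A) ∪ (nbhd G J ∩ nbhd G A) :=
    Set.inter_union_distrib_left _ _ _
  have hdis : Disjoint (nbhd G J ∩ A) (nbhd G J ∩ nbhd G A) := by
    rw [Set.disjoint_left]
    rintro v ⟨-, hvA⟩ ⟨-, hvN⟩
    have : v ∈ A ∩ nbhd G A := ⟨hvA, hvN⟩
    simp [hd] at this
  have hNcard : (nbhd G J ∩ (A ∪ nbhd G A)).ncard
      = (nbhd G J ∩ A).ncard + (nbhd G J ∩ nbhd G A).ncard := by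
    rw [h2]; exact Set.ncard_union_eq hdis (Set.toFinite _) (Set.toFinite _)
  -- key Hall-type inequality: |JN| ≤ |A ∩ N(JN)|
  have hHall : JN.ncard ≤ (A ∩ nbhd G JN).ncard := by
    have hKind : IsIndep G (A \ nbhd G JN) := indep_mono Set.diff_subset hA.1
    have hfK : ((A \ nbhd G JN).ncard : ℤ) - (nbhd G (A \ nbhd G JN)).ncard
        ≤ (A.ncard : ℤ) - (nbhd G A).ncard := (le_critDiff hKind).trans_eq hA.2.symm
    have hKcard : ((A \ nbhd G JN).ncard : ℤ) = (A.ncard : ℤ) - (A ∩ nbhd G JN).ncard := by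
      have h3 : A \ nbhd G JN = A \ (A ∩ nbhd G JN) := by ext v; simp
      have h4 := Set.ncard_diff (Set.inter_subset_left (s := A) (t := nbhd G JN)) (Set.toFinite _)
      have h5 : (A ∩ nbhd G JN).ncard ≤ A.ncard :=
        Set.ncard_le_ncard Set.inter_subset_left (Set.toFinite _)
      rw [h3, h4]; omega
    have hNK : nbhd G (A \ nbhd G JN) ⊆ nbhd G A \ JN := by
      rintro v ⟨k, hk, hadj⟩
      refine ⟨⟨k, hk.1, hadj⟩, fun hvJN => ?_⟩
      exact hk.2 ⟨v, hvJN, hadj.symm⟩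
    have hJNsub : JN ⊆ nbhd G A := Set.inter_subset_right
    have hNKcard : ((nbhd G (A \ nbhd G JN)).ncard : ℤ) ≤ ((nbhd G A).ncard : ℤ) - JN.ncard := by
      have h6 : (nbhd G (A \ nbhd G JN)).ncard ≤ (nbhd G A \ JN).ncard :=
        Set.ncard_le_ncard hNK (Set.toFinite _)
      have h7 := Set.ncard_diff hJNsub (Set.toFinite _)
      have h8 : JN.ncard ≤ (nbhd G A).ncard := Set.ncard_le_ncard hJNsub (Set.toFinite _)
      omega
    omega
  -- more inclusions
  have hin1 : (A ∩ nbhd G JN).ncard ≤ (nbhd G J ∩ A).ncard := by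
    refine Set.ncard_le_ncard ?_ (Set.toFinite _)
    rintro v ⟨hvA, hvN⟩
    exact ⟨nbhd_mono Set.inter_subset_left hvN, hvA⟩
  have hin2 : (nbhd G (J ∩ A)).ncard ≤ (nbhd G J ∩ nbhd G A).ncard := by
    refine Set.ncard_le_ncard ?_ (Set.toFinite _)
    exact Set.subset_inter (nbhd_mono Set.inter_subset_left) (nbhd_mono Set.inter_subset_right)
  simp only [diffSet]
  omega

lemma induce_preimage_facts {A I : Set V} (hIA : I ⊆ A) :
    Subtype.val '' (Subtype.val ⁻¹' I : Set ↥(A ∪ nbhd G A)) = I ∧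
    diffSet (G.induce (A ∪ nbhd G A)) (Subtype.val ⁻¹' I) = diffSet G I := by
  have hIW : I ⊆ A ∪ nbhd G A := hIA.trans Set.subset_union_left
  have himg : Subtype.val '' (Subtype.val ⁻¹' I : Set ↥(A ∪ nbhd G A)) = I := by
    rw [Set.image_preimage_eq_inter_range, Subtype.range_coe]
    exact Set.inter_eq_self_of_subset_left hIW
  refine ⟨himg, ?_⟩
  rw [diffSet_induce, himg]
  have hN : nbhd G I ∩ (A ∪ nbhd G A) = nbhd G I :=
    Set.inter_eq_self_of_subset_left ((nbhd_mono hIA).trans Set.subset_union_right)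
  rw [hN]
  rfl


end Helpers

theorem stmt_10 [Fintype V] (G : SimpleGraph V) (A : Set V)
    (hker : kerSet G ⊆ A) :
    critDiff G ≤ critDiff (G.induce (A ∪ nbhd G A)) ∧
    (IsCriticalIndep G A →
      critDiff (G.induce (A ∪ nbhd G A)) = critDiff G ∧
      Subtype.val '' kerSet (G.induce (A ∪ nbhd G A)) = kerSet G) := by
  have hKcrit : IsCriticalIndep G (kerSet G) := ker_criticalIndep
  -- Part 1
  obtain ⟨himgK, hdiffK⟩ := induce_preimage_facts (G := G) hker
  have hindK : IsIndep (G.induce (A ∪ nbhd G A)) (Subtype.val ⁻¹' kerSet G) := by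
    rw [isIndep_induce_iff, himgK]; exact hKcrit.1
  have hle : critDiff G ≤ critDiff (G.induce (A ∪ nbhd G A)) := by
    calc critDiff G = diffSet G (kerSet G) := hKcrit.2.symm
      _ = diffSet (G.induce (A ∪ nbhd G A)) (Subtype.val ⁻¹' kerSet G) := hdiffK.symm
      _ ≤ _ := le_critDiff hindK
  refine ⟨hle, fun hA => ?_⟩
  -- Part 2: upper bound
  have hub : critDiff (G.induce (A ∪ nbhd G A)) ≤ critDiff G := by
    apply csSup_le diffSet_nonempty
    rintro d ⟨J', hind, rfl⟩
    have hJW : Subtype.val '' J' ⊆ A ∪ nbhd G A := by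
      rintro _ ⟨x, -, rfl⟩; exact x.2
    have hJind : IsIndep G (Subtype.val '' J') := (isIndep_induce_iff _ _).1 hind
    rw [diffSet_induce]
    calc ((Subtype.val '' J').ncard : ℤ) - (nbhd G (Subtype.val '' J') ∩ (A ∪ nbhd G A)).ncard
        ≤ diffSet G (Subtype.val '' J' ∩ A) := key_chain hA hJind hJW
      _ ≤ critDiff G := le_critDiff (indep_mono Set.inter_subset_left hJind)
  have heq : critDiff (G.induce (A ∪ nbhd G A)) = critDiff G := le_antisymm hub hle
  refine ⟨heq, ?_⟩
  -- if J' is critical in H, then (val '' J') ∩ A is critical in G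
  have hcritJA : ∀ J' : Set ↥(A ∪ nbhd G A), IsCriticalIndep (G.induce (A ∪ nbhd G A)) J' →
      IsCriticalIndep G (Subtype.val '' J' ∩ A) := by
    intro J' hJ'
    have hJW : Subtype.val '' J' ⊆ A ∪ nbhd G A := by
      rintro _ ⟨x, -, rfl⟩; exact x.2
    have hJind : IsIndep G (Subtype.val '' J') := (isIndep_induce_iff _ _).1 hJ'.1
    have hindJA : IsIndep G (Subtype.val '' J' ∩ A) := indep_mono Set.inter_subset_left hJind
    refine ⟨hindJA, le_antisymm (le_critDiff hindJA) ?_⟩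
    have h1 : diffSet (G.induce (A ∪ nbhd G A)) J' = critDiff G := by rw [hJ'.2, heq]
    have h2 := key_chain hA hJind hJW
    rw [diffSet_induce] at h1
    omega
  -- ker equality
  apply Set.Subset.antisymm
  · rintro _ ⟨x', hx', rfl⟩
    intro I hI
    have hIA : IsCriticalIndep G (I ∩ A) := inter_criticalIndep hI hA
    obtain ⟨himg, hdiff⟩ := induce_preimage_facts (G := G)
      (Set.inter_subset_right (s := I) (t := A))
    have hind : IsIndep (G.induce (A ∪ nbhd G A)) (Subtype.val ⁻¹' (I ∩ A)) := by
      rw [isIndep_induce_iff, himg]; exact hIA.1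
    have hcrit' : IsCriticalIndep (G.induce (A ∪ nbhd G A)) (Subtype.val ⁻¹' (I ∩ A)) :=
      ⟨hind, by rw [hdiff, hIA.2, heq]⟩
    have : x' ∈ Subtype.val ⁻¹' (I ∩ A) := hx' _ hcrit'
    exact this.1
  · intro x hx
    have hxW : x ∈ A ∪ nbhd G A := Or.inl (hker hx)
    refine ⟨⟨x, hxW⟩, ?_, rfl⟩
    intro J' hJ'
    have hcrit := hcritJA J' hJ'
    have hxmem : x ∈ Subtype.val '' J' ∩ A :=
      Set.sInter_subset_of_mem hcrit hx
    obtain ⟨y', hy', hyx⟩ := hxmem.1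
    have : y' = ⟨x, hxW⟩ := Subtype.ext hyx
    rwa [← this]
end
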